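/- Every M♮-concave set function f : 2^N → ℝ on a finite set N is submodular: f(X) + f(Y) ≥ f(X ∪ Y) + f(X ∩ Y) for all X, Y ⊆ N. -/
import Mathlib


theorem stmt13 {α : Type*} [Fintype α] [DecidableEq α] (f : Finset α → ℝ)
    (hM : ∀ X Y : Finset α, ∀ i ∈ X \ Y,
      f X + f Y ≤ f (X.erase i) + f (insert i Y) ∨
      ∃ j ∈ Y \ X,
        f X + f Y ≤ f (insert j (X.erase i)) + f ((insert i Y).erase j)) :
    ∀ X Y : Finset α, f X + f Y ≥ f (X ∪ Y) + f (X ∩ Y) := by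
  -- nested exchange: for B ⊆ A, i ∈ A \ B, second case of hM is vacuous
  have nested : ∀ A B : Finset α, B ⊆ A → ∀ i ∈ A, i ∉ B →
      f A + f B ≤ f (A.erase i) + f (insert i B) := by
    intro A B hBA i hiA hiB
    rcases hM A B i (Finset.mem_sdiff.mpr ⟨hiA, hiB⟩) with h | ⟨j, hj, _⟩
    · exact h
    · exact absurd (Finset.mem_sdiff.mp hj) (by
        rintro ⟨hjB, hjA⟩; exact hjA (hBA hjB))
  intro X Y
  induction Y using Finset.strongInduction with
  | _ Y ih =>
    by_cases h : Y ⊆ X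
    · rw [Finset.union_eq_left.mpr h, Finset.inter_eq_right.mpr h]
    · obtain ⟨i, hiY, hiX⟩ := Finset.not_subset.mp h
      have hss : Y.erase i ⊂ Y := Finset.erase_ssubset hiY
      have IH := ih (Y.erase i) hss
      have h1 : X ∩ Y.erase i = X ∩ Y := by
        ext x
        simp only [Finset.mem_inter, Finset.mem_erase]
        constructor
        · rintro ⟨hx, _, hy⟩; exact ⟨hx, hy⟩
        · rintro ⟨hx, hy⟩; exact ⟨hx, fun hxi => hiX (hxi ▸ hx), hy⟩
      have h2 : X ∪ Y.erase i = (X ∪ Y).erase i := by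
        ext x
        simp only [Finset.mem_union, Finset.mem_erase]
        constructor
        · rintro (hx | ⟨hxi, hy⟩)
          · exact ⟨fun hh => hiX (hh ▸ hx), Or.inl hx⟩
          · exact ⟨hxi, Or.inr hy⟩
        · rintro ⟨hxi, hx | hy⟩
          · exact Or.inl hx
          · exact Or.inr ⟨hxi, hy⟩
      have hdr := nested (X ∪ Y) (Y.erase i)
        ((Finset.erase_subset _ _).trans Finset.subset_union_right)
        i (Finset.mem_union_right _ hiY) (Finset.notMem_erase _ _)
      rw [Finset.insert_erase hiY] at hdr
      rw [h1, h2] at IH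
      linarith
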